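/- Let G be a totally disconnected locally compact group, let π : G → H be a continuous, open, surjective group homomorphism onto a totally disconnected locally compact group H with compact kernel, let α be a topological automorphism of G preserving ker(π), and let α̂ be the induced automorphism of H. If Ô is a compact open subgroup of H, then O := π⁻¹(Ô) is a compact open subgroup of G and the index [α(O) : α(O) ∩ O] equals the index [α̂(Ô) : α̂(Ô) ∩ Ô]. -/

import Mathlib

open scoped Pointwise

theorem aux_closedMap {G H : Type} [Group G] [TopologicalSpace G] [IsTopologicalGroup G]
    [Group H] [TopologicalSpace H]
    (π : G →* H) (hπc : Continuous π) (hπo : IsOpenMap π) (hπs : Function.Surjective π)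
    (hker : IsCompact (π.ker : Set G)) : IsClosedMap π := by
  intro F hF
  have hsat : π ⁻¹' (π '' F) = F * (π.ker : Set G) := by
    ext x
    simp only [Set.mem_preimage, Set.mem_image, Set.mem_mul, SetLike.mem_coe,
      MonoidHom.mem_ker]
    constructor
    · rintro ⟨f, hf, hfx⟩
      exact ⟨f, hf, f⁻¹ * x, by simp [hfx], by group⟩
    · rintro ⟨f, hf, k, hk, rfl⟩
      exact ⟨f, hf, by simp [hk]⟩
  have hclosed : IsClosed (π ⁻¹' (π '' F)) := by
    rw [hsat]
    exact hF.mul_right_of_isCompact hker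
  have : IsOpen ((π '' F)ᶜ) := by
    have : π '' ((π ⁻¹' (π '' F))ᶜ) = (π '' F)ᶜ := by
      apply Set.eq_of_subset_of_subset
      · rintro _ ⟨x, hx, rfl⟩
        exact fun h => hx h
      · rintro y hy
        obtain ⟨x, rfl⟩ := hπs y
        exact ⟨x, hy, rfl⟩
    rw [← this]
    exact hπo _ hclosed.isOpen_compl
  exact isOpen_compl_iff.mp this

/-- Let `π : G → H` be a continuous open surjective homomorphism with compact kernel
between totally disconnected locally compact groups, `α` a topological automorphism of `G`
preserving `ker π`, and `β` the induced automorphism of `H`.  If `Ô` is a compact open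
subgroup of `H`, then `O = π⁻¹(Ô)` is compact open and `[α(O) : α(O) ∩ O] = [β(Ô) : β(Ô) ∩ Ô]`. -/
theorem stmt7 (G H : Type) [Group G] [TopologicalSpace G] [IsTopologicalGroup G]
    [TotallyDisconnectedSpace G] [LocallyCompactSpace G]
    [Group H] [TopologicalSpace H] [IsTopologicalGroup H]
    [TotallyDisconnectedSpace H] [LocallyCompactSpace H]
    (π : G →* H) (hπc : Continuous π) (hπo : IsOpenMap π) (hπs : Function.Surjective π)
    (hker : IsCompact (π.ker : Set G))
    (α : G ≃* G) (hαc : Continuous α) (hαc' : Continuous α.symm)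
    (hαker : Subgroup.map α.toMonoidHom π.ker = π.ker)
    (β : H ≃* H) (hβ : ∀ g : G, β (π g) = π (α g))
    (O' : Subgroup H) (hO'cp : IsCompact (O' : Set H)) (hO'op : IsOpen (O' : Set H)) :
    IsCompact ((O'.comap π : Subgroup G) : Set G) ∧
    IsOpen ((O'.comap π : Subgroup G) : Set G) ∧
    (O'.comap π).relIndex ((O'.comap π).map α.toMonoidHom) =
      O'.relIndex (O'.map β.toMonoidHom) := by
  have hproper : IsProperMap (π : G → H) := by
    rw [isProperMap_iff_isClosedMap_and_compact_fibers]
    refine ⟨hπc, aux_closedMap π hπc hπo hπs hker, fun y => ?_⟩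
    obtain ⟨g, rfl⟩ := hπs y
    have : π ⁻¹' {π g} = (g * ·) '' (π.ker : Set G) := by
      ext x
      simp only [Set.mem_preimage, Set.mem_singleton_iff, Set.mem_image, SetLike.mem_coe,
        MonoidHom.mem_ker]
      constructor
      · intro h
        exact ⟨g⁻¹ * x, by simp [h], by group⟩
      · rintro ⟨k, hk, rfl⟩
        simp [hk]
    rw [this]
    exact hker.image (continuous_mul_left g)
  refine ⟨hproper.isCompact_preimage hO'cp, hO'op.preimage hπc, ?_⟩
  have hmap : (O'.comap π).map α.toMonoidHom = (O'.map β.toMonoidHom).comap π := by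
    ext x
    simp only [Subgroup.mem_map, Subgroup.mem_comap]
    constructor
    · rintro ⟨g, hg, rfl⟩
      exact ⟨π g, hg, by simpa using hβ g⟩
    · rintro ⟨h, hh, hhx⟩
      refine ⟨α.symm x, ?_, by simp⟩
      have : β (π (α.symm x)) = π x := by
        rw [hβ (α.symm x)]; simp
      have hx : π (α.symm x) = β.symm (π x) := by
        apply β.injective; simp [this]
      have hxh : π x = β h := by simpa using hhx.symm
      rw [hx, hxh]
      simpa using hh
  rw [hmap, Subgroup.relIndex_comap, Subgroup.map_comap_eq_self_of_surjective hπs]
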